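/- If a linearly ordered field F does not satisfy the Cut Axiom (that is, F has a gap), then Littlewood's First Principle fails in F: there exist a ≤ b in F, a measurable set E ⊆ [a,b], and ε ∈ P such that for every finite collection of intervals I_1, …, I_m ⊆ [a,b], with U = I_1 ∪ ⋯ ∪ I_m, it is not the case that χ_{E△U} has a Lebesgue integral with ∫_a^b χ_{E△U} < ε. -/

import Mathlib

namespace Littlewood

variable {F : Type*} [Field F] [LinearOrder F] [IsStrictOrderedRing F]

/-- A sequence `s` in `F` converges to `L`. -/
def SeqConv (s : ℕ → F) (L : F) : Prop :=
  ∀ ε : F, 0 < ε → ∃ N : ℕ, ∀ n, N ≤ n → s n - L ∈ Set.Ioo (-ε) ε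

/-- `φ` is a step function on `[a,b]`: there is a partition
`a = x 0 < x 1 < ⋯ < x n = b` such that `φ` is constant on each open subinterval. -/
def IsStepOn (a b : F) (φ : F → F) : Prop :=
  ∃ (n : ℕ) (x : ℕ → F), x 0 = a ∧ x n = b ∧ (∀ i < n, x i < x (i + 1)) ∧
    ∀ i < n, ∃ M : F, ∀ t ∈ Set.Ioo (x i) (x (i + 1)), φ t = M

/-- `I` is the integral of the step function `φ` over `[a,b]`, computed from
an admissible partition `a = x 0 < ⋯ < x n = b` with constant values `M i`. -/
def HasStepIntegral (a b : F) (φ : F → F) (I : F) : Prop :=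
  ∃ (n : ℕ) (x : ℕ → F) (M : ℕ → F), x 0 = a ∧ x n = b ∧ (∀ i < n, x i < x (i + 1)) ∧
    (∀ i < n, ∀ t ∈ Set.Ioo (x i) (x (i + 1)), φ t = M i) ∧
    I = ∑ i ∈ Finset.range n, M i * (x (i + 1) - x i)

/-- `S ⊆ [a,b]` has measure zero: for every `ε > 0` there is a countable family of
open intervals `(c n, d n) ⊆ [a,b]` covering `S` whose partial sums of lengths
converge to a sum less than `ε`. -/
def NullSet (a b : F) (S : Set F) : Prop :=
  ∀ ε : F, 0 < ε → ∃ c d : ℕ → F,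
    (∀ n, c n ≤ d n ∧ Set.Ioo (c n) (d n) ⊆ Set.Icc a b) ∧
    S ⊆ (⋃ n, Set.Ioo (c n) (d n)) ∧
    ∃ s : F, s < ε ∧ SeqConv (fun N => ∑ k ∈ Finset.range N, (d k - c k)) s

/-- `Q` holds almost everywhere in `[a,b]`. -/
def AEOn (a b : F) (Q : F → Prop) : Prop :=
  NullSet a b {x ∈ Set.Icc a b | ¬ Q x}

/-- `φ` is a monotonically decreasing sequence of step functions `[a,b] → P ∪ {0}`
converging to `f` almost everywhere in `[a,b]`. -/
def ApproxSeq (a b : F) (φ : ℕ → F → F) (f : F → F) : Prop :=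
  (∀ n, IsStepOn a b (φ n)) ∧
  (∀ n, ∀ x ∈ Set.Icc a b, 0 ≤ φ n x) ∧
  (∀ n, ∀ x ∈ Set.Icc a b, φ (n + 1) x ≤ φ n x) ∧
  AEOn a b fun x => SeqConv (fun n => φ n x) (f x)

/-- A nonnegative-valued function on `[a,b]` is Lebesgue measurable. -/
def LebMeasurableNN (a b : F) (f : F → F) : Prop :=
  ∃ φ : ℕ → F → F, ApproxSeq a b φ f

/-- A nonnegative-valued function on `[a,b]` has Lebesgue integral `I`:
it is Lebesgue measurable and for every monotonically decreasing sequence of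
nonnegative step functions converging to `f` a.e., the sequence of their
(step) integrals converges to `I`. -/
def HasLebIntegralNN (a b : F) (f : F → F) (I : F) : Prop :=
  LebMeasurableNN a b f ∧
    ∀ φ : ℕ → F → F, ApproxSeq a b φ f →
      ∀ J : ℕ → F, (∀ n, HasStepIntegral a b (φ n) (J n)) → SeqConv J I

/-- A function `[a,b] → F` is Lebesgue measurable (via its nonnegative parts). -/
def LebMeasurable (a b : F) (f : F → F) : Prop :=
  LebMeasurableNN a b (fun x => max (f x) 0) ∧ LebMeasurableNN a b fun x => max (-f x) 0

/-- A function `[a,b] → F` has a Lebesgue integral (via its nonnegative parts). -/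
def HasLebIntegral (a b : F) (f : F → F) : Prop :=
  (∃ I : F, HasLebIntegralNN a b (fun x => max (f x) 0) I) ∧
  ∃ I : F, HasLebIntegralNN a b (fun x => max (-f x) 0) I

/-- The characteristic function of `E`. -/
noncomputable def chi (E : Set F) : F → F := E.indicator fun _ => 1

/-- `E ⊆ [a,b]` is a measurable set: its characteristic function is Lebesgue measurable. -/
def MeasSet (a b : F) (E : Set F) : Prop := LebMeasurableNN a b (chi E)

/-- `E` has Lebesgue measure: `E` has measure zero or `χ_E` has a Lebesgue integral. -/
def HasLebMeasure (a b : F) (E : Set F) : Prop :=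
  NullSet a b E ∨ ∃ I : F, HasLebIntegralNN a b (chi E) I

/-- `S` is an interval with endpoints `c ≤ d` (any of the four kinds). -/
def IsIntervalWith (S : Set F) (c d : F) : Prop :=
  S = Set.Icc c d ∨ S = Set.Ico c d ∨ S = Set.Ioc c d ∨ S = Set.Ioo c d

/-- `S` is an interval. -/
def IsInterval (S : Set F) : Prop := ∃ c d : F, IsIntervalWith S c d

/-- `f` is continuous on `D`. -/
def ContOn (D : Set F) (f : F → F) : Prop :=
  ∀ c ∈ D, ∀ ε : F, 0 < ε → ∃ δ : F, 0 < δ ∧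
    ∀ x ∈ D ∩ Set.Ioo (c - δ) (c + δ), f x - f c ∈ Set.Ioo (-ε) ε

/-- The functions `g n` converge uniformly to `f` on `D`. -/
def UnifConvOn (D : Set F) (g : ℕ → F → F) (f : F → F) : Prop :=
  ∀ ε : F, 0 < ε → ∃ N : ℕ, ∀ n, N ≤ n → ∀ x ∈ D, f x - g n x ∈ Set.Ioo (-ε) ε

/-- `A` is a cut of `F`. -/
def IsCut (A : Set F) : Prop :=
  A.Nonempty ∧ A ≠ Set.univ ∧ ∀ x ∈ A, ∀ y ∉ A, x < y

/-- `c` is a cut point of `A`. -/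
def IsCutPoint (A : Set F) (c : F) : Prop :=
  ∀ x ∈ A, ∀ y ∉ A, x ≤ c ∧ c ≤ y

variable (F) in
/-- The Cut Axiom: every cut of `F` has a cut point. -/
def CutAxiom : Prop := ∀ A : Set F, IsCut A → ∃ c : F, IsCutPoint A c

variable (F) in
/-- Lebesgue Integral Property. -/
def LIP : Prop :=
  ∀ a b : F, a ≤ b → ∀ f : F → F, LebMeasurable a b f → HasLebIntegral a b f

variable (F) in
/-- Lebesgue Measure Property. -/
def LMP : Prop :=
  ∀ a b : F, a ≤ b → ∀ E ⊆ Set.Icc a b, MeasSet a b E → HasLebMeasure a b E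

variable (F) in
/-- Littlewood's First Principle. -/
def LP1 : Prop :=
  ∀ a b : F, a ≤ b → ∀ E ⊆ Set.Icc a b, MeasSet a b E → ∀ ε : F, 0 < ε →
    ∃ (m : ℕ) (I : ℕ → Set F), (∀ i < m, IsInterval (I i) ∧ I i ⊆ Set.Icc a b) ∧
      ∃ J : F, HasLebIntegralNN a b
        (chi ((E \ ⋃ i < m, I i) ∪ ((⋃ i < m, I i) \ E))) J ∧ J < ε

variable (F) in
/-- Littlewood's Second Principle. -/
def LP2 : Prop :=
  ∀ a b : F, a ≤ b → ∀ f : F → F, LebMeasurable a b f → ∀ ε : F, 0 < ε →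
    ∃ E ⊆ Set.Icc a b, MeasSet a b E ∧ ContOn (Set.Icc a b \ E) f ∧
      ∃ J : F, HasLebIntegralNN a b (chi E) J ∧ J < ε

variable (F) in
/-- Littlewood's Third Principle. -/
def LP3 : Prop :=
  ∀ a b : F, a ≤ b → ∀ φ : ℕ → F → F, (∀ n, LebMeasurable a b (φ n)) →
    ∀ f : F → F, AEOn a b (fun x => SeqConv (fun n => φ n x) (f x)) →
    ∀ ε : F, 0 < ε →
      ∃ E ⊆ Set.Icc a b, MeasSet a b E ∧ UnifConvOn (Set.Icc a b \ E) φ f ∧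
        ∃ J : F, HasLebIntegralNN a b (chi E) J ∧ J < ε

section Aux
variable {F : Type*} [Field F] [LinearOrder F] [IsStrictOrderedRing F]

open Set

lemma seqConv_of_eventually {s : ℕ → F} {L : F} (h : ∃ N, ∀ n, N ≤ n → s n = L) :
    SeqConv s L := by
  obtain ⟨N, hN⟩ := h
  intro ε hε
  exact ⟨N, fun n hn => by simp [hN n hn, hε, neg_lt_zero.mpr hε]⟩

lemma seqConv_const (c : F) : SeqConv (fun _ => c) c :=
  seqConv_of_eventually ⟨0, fun _ _ => rfl⟩

lemma seqConv_const_eq {c L : F} (h : SeqConv (fun _ => c) L) : c = L := by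
  by_contra hne
  have hpos : 0 < |c - L| := abs_pos.mpr (sub_ne_zero.mpr hne)
  obtain ⟨N, hN⟩ := h _ hpos
  have h1 : (fun _ : ℕ => c) N - L ∈ Set.Ioo (-|c - L|) |c - L| := hN N le_rfl
  rw [Set.mem_Ioo] at h1
  exact absurd (abs_lt.mpr ⟨h1.1, h1.2⟩) (lt_irrefl _)

lemma SeqConv.const_sub {s : ℕ → F} {L : F} (K : F) (h : SeqConv s L) :
    SeqConv (fun n => K - s n) (K - L) := by
  intro ε hε
  obtain ⟨N, hN⟩ := h ε hε
  refine ⟨N, fun n hn => ?_⟩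
  have h1 : s n - L ∈ Set.Ioo (-ε) ε := hN n hn
  rw [Set.mem_Ioo] at h1
  show -ε < K - s n - (K - L) ∧ K - s n - (K - L) < ε
  constructor <;> [linarith [h1.2]; linarith [h1.1]]

lemma SeqConv.add_const {s : ℕ → F} {L : F} (K : F) (h : SeqConv s L) :
    SeqConv (fun n => s n + K) (L + K) := by
  intro ε hε
  obtain ⟨N, hN⟩ := h ε hε
  refine ⟨N, fun n hn => ?_⟩
  have h1 : s n - L ∈ Set.Ioo (-ε) ε := hN n hn
  rw [Set.mem_Ioo] at h1
  show -ε < s n + K - (L + K) ∧ s n + K - (L + K) < ε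
  constructor <;> [linarith [h1.1]; linarith [h1.2]]

lemma seqConv_congr {s s' : ℕ → F} {L : F} (he : ∀ n, s n = s' n) (h : SeqConv s L) :
    SeqConv s' L := by
  have : s = s' := funext he
  rwa [← this]

lemma antitone_of_succ {s : ℕ → F} (h : ∀ k, s (k + 1) ≤ s k) :
    ∀ {n m : ℕ}, n ≤ m → s m ≤ s n := by
  intro n m hnm
  induction m with
  | zero => simp_all
  | succ m ih =>
    rcases Nat.lt_or_ge n (m+1) with hl | hg
    · exact le_trans (h m) (ih (Nat.lt_succ_iff.mp hl))
    · have : n = m + 1 := le_antisymm hnm hg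
      simp [this]

lemma monotone_of_succ {s : ℕ → F} (h : ∀ k, s k ≤ s (k + 1)) :
    ∀ {n m : ℕ}, n ≤ m → s n ≤ s m := by
  intro n m hnm
  induction m with
  | zero => simp_all
  | succ m ih =>
    rcases Nat.lt_or_ge n (m+1) with hl | hg
    · exact le_trans (ih (Nat.lt_succ_iff.mp hl)) (h m)
    · have : n = m + 1 := le_antisymm hnm hg
      simp [this]

lemma le_of_antitone_seqConv {s : ℕ → F} {L : F} (hm : ∀ k, s (k + 1) ≤ s k)
    (h : SeqConv s L) : ∀ n, L ≤ s n := by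
  intro n
  by_contra hlt
  push_neg at hlt
  obtain ⟨N, hN⟩ := h (L - s n) (by linarith)
  have h1 := hN (max N n) (le_max_left _ _)
  rw [Set.mem_Ioo] at h1
  have h2 : s (max N n) ≤ s n := antitone_of_succ hm (le_max_right _ _)
  linarith [h1.1]

lemma ge_of_monotone_seqConv {s : ℕ → F} {L : F} (hm : ∀ k, s k ≤ s (k + 1))
    (h : SeqConv s L) : ∀ n, s n ≤ L := by
  intro n
  by_contra hlt
  push_neg at hlt
  obtain ⟨N, hN⟩ := h (s n - L) (by linarith)
  have h1 := hN (max N n) (le_max_left _ _)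
  rw [Set.mem_Ioo] at h1
  have h2 : s n ≤ s (max N n) := monotone_of_succ hm (le_max_right _ _)
  linarith [h1.2]

lemma nullSet_empty (a b : F) : NullSet a b (∅ : Set F) := by
  intro ε hε
  refine ⟨fun _ => a, fun _ => a, fun n => ⟨le_rfl, by simp⟩, by simp, 0, hε, ?_⟩
  have : (fun N : ℕ => ∑ k ∈ Finset.range N, ((fun _ => a) k - (fun _ => a) k)) = fun _ => (0:F) := by
    funext N; simp
  rw [this]
  exact seqConv_const 0

lemma nullSet_mono {a b : F} {S S' : Set F} (h : S ⊆ S') (hN : NullSet a b S') :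
    NullSet a b S := by
  intro ε hε
  obtain ⟨c, d, h1, h2, h3⟩ := hN ε hε
  exact ⟨c, d, h1, h.trans h2, h3⟩

omit [Field F] [LinearOrder F] [IsStrictOrderedRing F] in
lemma crossing {A : Set F} (x : ℕ → F) :
    ∀ k : ℕ, x 0 ∈ A → x k ∉ A → ∃ i < k, x i ∈ A ∧ x (i + 1) ∉ A := by
  intro k
  induction k with
  | zero => intro h0 hk; exact absurd h0 hk
  | succ k ih =>
    intro h0 hk
    by_cases hxk : x k ∈ A
    · exact ⟨k, Nat.lt_succ_self k, hxk, hk⟩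
    · obtain ⟨i, hi, h⟩ := ih h0 hxk
      exact ⟨i, hi.trans (Nat.lt_succ_self k), h⟩

end Aux
section Enum
variable {F : Type*} [Field F] [LinearOrder F] [IsStrictOrderedRing F]
open Set

/-- Enumeration of a finite set of field elements in increasing order. -/
noncomputable def enum (T : Finset F) : ℕ → F := fun i =>
  if h : i < T.card then T.orderEmbOfFin rfl ⟨i, h⟩ else 0

lemma enum_mem {T : Finset F} {i : ℕ} (h : i < T.card) : enum T i ∈ T := by
  simp only [enum, dif_pos h]
  exact Finset.orderEmbOfFin_mem _ _ _

lemma enum_lt {T : Finset F} {i j : ℕ} (hij : i < j) (hj : j < T.card) :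
    enum T i < enum T j := by
  simp only [enum, dif_pos hj, dif_pos (hij.trans hj)]
  exact (T.orderEmbOfFin rfl).strictMono (show (⟨i, hij.trans hj⟩ : Fin T.card) < ⟨j, hj⟩ from hij)

lemma enum_le {T : Finset F} {i j : ℕ} (hij : i ≤ j) (hj : j < T.card) :
    enum T i ≤ enum T j := by
  rcases eq_or_lt_of_le hij with rfl | h
  · exact le_rfl
  · exact (enum_lt h hj).le

lemma enum_surj {T : Finset F} {z : F} (hz : z ∈ T) : ∃ i, i < T.card ∧ enum T i = z := by
  have : z ∈ Set.range (T.orderEmbOfFin rfl) := by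
    rw [Finset.range_orderEmbOfFin]; exact hz
  obtain ⟨⟨i, hi⟩, he⟩ := this
  exact ⟨i, hi, by simp only [enum, dif_pos hi]; exact he⟩

lemma enum_lt_reflect {T : Finset F} {i j : ℕ} (hi : i < T.card) (hj : j < T.card)
    (h : enum T i < enum T j) : i < j := by
  by_contra hc
  push_neg at hc
  exact absurd (enum_le hc hi) (not_le.mpr h)

lemma enum_zero {T : Finset F} {a : F} (ha : a ∈ T) (hmin : ∀ z ∈ T, a ≤ z) :
    enum T 0 = a := by
  obtain ⟨i, hi, he⟩ := enum_surj ha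
  have h0 : (0:ℕ) < T.card := Nat.pos_of_ne_zero (by rintro h; rw [h] at hi; omega)
  exact le_antisymm (he ▸ enum_le (Nat.zero_le i) hi) (hmin _ (enum_mem h0))

lemma enum_last {T : Finset F} {b : F} (hb : b ∈ T) (hmax : ∀ z ∈ T, z ≤ b) :
    enum T (T.card - 1) = b := by
  obtain ⟨i, hi, he⟩ := enum_surj hb
  have h0 : T.card - 1 < T.card := by omega
  exact le_antisymm (hmax _ (enum_mem h0)) (he ▸ enum_le (by omega) h0)

lemma enum_gapfree {T : Finset F} {i : ℕ} (h : i + 1 < T.card) {z : F} (hz : z ∈ T) :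
    z ∉ Set.Ioo (enum T i) (enum T (i + 1)) := by
  rintro ⟨h1, h2⟩
  obtain ⟨j, hj, rfl⟩ := enum_surj hz
  have l1 : i < j := enum_lt_reflect (by omega) hj h1
  have l2 : j < i + 1 := enum_lt_reflect hj h h2
  omega

/-- If `p < q` are both in `T` and no element of `T` lies strictly between them,
then `q` immediately follows `p` in the enumeration. -/
lemma enum_adjacent {T : Finset F} {p q : F} (hp : p ∈ T) (hq : q ∈ T) (hpq : p < q)
    (hgap : ∀ z ∈ T, z ∉ Set.Ioo p q) :
    ∃ k, k + 1 < T.card ∧ enum T k = p ∧ enum T (k + 1) = q := by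
  obtain ⟨k, hk, hek⟩ := enum_surj hp
  obtain ⟨l, hl, hel⟩ := enum_surj hq
  have hkl : k < l := enum_lt_reflect hk hl (by rw [hek, hel]; exact hpq)
  have hk1 : k + 1 < T.card := by omega
  refine ⟨k, hk1, hek, ?_⟩
  have h1 : p < enum T (k + 1) := hek ▸ enum_lt (Nat.lt_succ_self k) hk1
  have h2 : enum T (k + 1) ≤ q := hel ▸ enum_le (by omega) hl
  rcases eq_or_lt_of_le h2 with he | hlt
  · exact he
  · exact absurd ⟨h1, hlt⟩ (hgap _ (enum_mem hk1))

end Enum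
section Enum2
variable {F : Type*} [Field F] [LinearOrder F] [IsStrictOrderedRing F]

lemma enum_le_reflect {T : Finset F} {i j : ℕ} (hi : i < T.card) (hj : j < T.card)
    (h : enum T i ≤ enum T j) : i ≤ j := by
  by_contra hc
  push_neg at hc
  exact absurd (enum_lt hc hi) (not_lt.mpr h)

end Enum2
section Aux3
variable {F : Type*} [Field F] [LinearOrder F] [IsStrictOrderedRing F]
open Set

lemma chi_of_mem {S : Set F} {t : F} (h : t ∈ S) : chi S t = 1 := by
  simp [chi, Set.indicator_of_mem h]

lemma chi_of_not_mem {S : Set F} {t : F} (h : t ∉ S) : chi S t = 0 := by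
  simp [chi, Set.indicator_of_notMem h]

lemma chi_nonneg (S : Set F) (t : F) : 0 ≤ chi S t := by
  by_cases h : t ∈ S
  · rw [chi_of_mem h]; norm_num
  · rw [chi_of_not_mem h]

lemma chi_congr {S : Set F} {t t' : F} (h : t ∈ S ↔ t' ∈ S) : chi S t = chi S t' := by
  by_cases hm : t ∈ S
  · rw [chi_of_mem hm, chi_of_mem (h.mp hm)]
  · rw [chi_of_not_mem hm, chi_of_not_mem (fun hc => hm (h.mpr hc))]

lemma mem_intervalWith_congr {S : Set F} {c d y z t t' : F} (hS : IsIntervalWith S c d)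
    (hc : c ∉ Set.Ioo y z) (hd : d ∉ Set.Ioo y z)
    (ht : t ∈ Set.Ioo y z) (ht' : t' ∈ Set.Ioo y z) : (t ∈ S ↔ t' ∈ S) := by
  obtain ⟨hty, htz⟩ := ht
  obtain ⟨ht'y, ht'z⟩ := ht'
  have hc' : c ≤ y ∨ z ≤ c := by
    by_contra h
    push_neg at h
    exact hc ⟨h.1, h.2⟩
  have hd' : d ≤ y ∨ z ≤ d := by
    by_contra h
    push_neg at h
    exact hd ⟨h.1, h.2⟩
  have a1 : c < t ↔ c < t' := by
    rcases hc' with h | h <;> constructor <;> intro hh <;> linarith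
  have a2 : c ≤ t ↔ c ≤ t' := by
    rcases hc' with h | h <;> constructor <;> intro hh <;> linarith
  have a3 : t < d ↔ t' < d := by
    rcases hd' with h | h <;> constructor <;> intro hh <;> linarith
  have a4 : t ≤ d ↔ t' ≤ d := by
    rcases hd' with h | h <;> constructor <;> intro hh <;> linarith
  rcases hS with rfl | rfl | rfl | rfl
  · simp only [Set.mem_Icc]; rw [a2, a4]
  · simp only [Set.mem_Ico]; rw [a2, a3]
  · simp only [Set.mem_Ioc]; rw [a1, a4]
  · simp only [Set.mem_Ioo]; rw [a1, a3]

lemma isCutPoint_of_incr {A : Set F} (hcut : ∀ x ∈ A, ∀ y ∉ A, x < y) {w : ℕ → F} {L : F}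
    (hw : ∀ n, w n ∈ A) (hm : ∀ n, w n ≤ w (n + 1)) (hcof : ∀ x ∈ A, ∃ n, x ≤ w n)
    (h : SeqConv w L) : IsCutPoint A L := by
  intro x hx y hy
  constructor
  · obtain ⟨n, hn⟩ := hcof x hx
    exact hn.trans (ge_of_monotone_seqConv hm h n)
  · by_contra hc
    push_neg at hc
    obtain ⟨N, hN⟩ := h (L - y) (by linarith)
    have h1 : w N - L ∈ Set.Ioo (-(L - y)) (L - y) := hN N le_rfl
    rw [Set.mem_Ioo] at h1
    have h2 := hcut (w N) (hw N) y hy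
    linarith [h1.1]

lemma isCutPoint_of_decr {A : Set F} (hcut : ∀ x ∈ A, ∀ y ∉ A, x < y) {s : ℕ → F} {L : F}
    (hs : ∀ n, s n ∉ A) (hm : ∀ n, s (n + 1) ≤ s n) (hcoi : ∀ y ∉ A, ∃ n, s n ≤ y)
    (h : SeqConv s L) : IsCutPoint A L := by
  intro x hx y hy
  constructor
  · by_contra hc
    push_neg at hc
    obtain ⟨N, hN⟩ := h (x - L) (by linarith)
    have h1 : s N - L ∈ Set.Ioo (-(x - L)) (x - L) := hN N le_rfl
    rw [Set.mem_Ioo] at h1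
    have h2 := hcut x hx (s N) (hs N)
    linarith [h1.2]
  · obtain ⟨n, hn⟩ := hcoi y hy
    exact (le_of_antitone_seqConv hm h n).trans hn

end Aux3
section Aux4
variable {F : Type*} [Field F] [LinearOrder F] [IsStrictOrderedRing F]
open Set

lemma clip_avoid {a b : F} {T : Finset F} {i : ℕ} (hi : i + 1 < T.card)
    (hTa : ∀ z ∈ T, a ≤ z) (hTb : ∀ z ∈ T, z ≤ b) (e : F)
    (he : max a (min e b) ∈ T) : e ∉ Set.Ioo (enum T i) (enum T (i + 1)) := by
  by_cases h1 : a ≤ e ∧ e ≤ b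
  · have : max a (min e b) = e := by
      rw [min_eq_left h1.2, max_eq_right h1.1]
    rw [this] at he
    exact enum_gapfree hi he
  · rintro ⟨hl, hr⟩
    rcases not_and_or.mp h1 with h | h
    · push_neg at h
      exact absurd (h.trans_le (hTa _ (enum_mem (by omega)))) (not_lt.mpr hl.le)
    · push_neg at h
      exact absurd ((hTb _ (enum_mem hi)).trans_lt h) (not_lt.mpr hr.le)

lemma mid_mem_Ioo {x y : F} (h : x < y) : (x + y) / 2 ∈ Set.Ioo x y :=
  ⟨by linarith, by linarith⟩

end Aux4
section CaseA
variable {F : Type*} [Field F] [LinearOrder F] [IsStrictOrderedRing F]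
open Set Finset

lemma caseA_main {a b u v : F} (hau : a < u) (huv : u < v) (hvb : v < b)
    (hN : NullSet a b (Set.Ioo u v)) :
    ∃ E ⊆ Set.Icc a b, MeasSet a b E ∧ ∃ ε : F, 0 < ε ∧
      ∀ (m : ℕ) (I : ℕ → Set F), (∀ i < m, IsInterval (I i) ∧ I i ⊆ Set.Icc a b) →
        ¬ ∃ J : F, HasLebIntegralNN a b
            (chi ((E \ ⋃ i < m, I i) ∪ ((⋃ i < m, I i) \ E))) J ∧ J < ε := by
  classical
  have hab : a < b := hau.trans (huv.trans hvb)
  have hEsub : Set.Ioo u v ⊆ Set.Icc a b :=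
    fun x hx => ⟨(hau.trans hx.1).le, (hx.2.trans hvb).le⟩
  -- chi (Ioo u v) is a step function
  have hstepE : IsStepOn a b (chi (Set.Ioo u v)) := by
    refine ⟨3, fun i => if i = 0 then a else if i = 1 then u else if i = 2 then v else b,
      rfl, rfl, ?_, ?_⟩
    · intro i hi
      interval_cases i
      · simpa using hau
      · simpa using huv
      · simpa using hvb
    · intro i hi
      interval_cases i
      · refine ⟨0, fun t ht => chi_of_not_mem ?_⟩
        simp only [if_pos, if_neg] at ht
        rintro ⟨h1, h2⟩
        simp at ht
        linarith [ht.2]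
      · refine ⟨1, fun t ht => chi_of_mem ?_⟩
        simpa using ht
      · refine ⟨0, fun t ht => chi_of_not_mem ?_⟩
        rintro ⟨h1, h2⟩
        simp at ht
        linarith [ht.1]
  have hmeas : MeasSet a b (Set.Ioo u v) := by
    refine ⟨fun _ => chi (Set.Ioo u v), fun _ => hstepE, fun _ x _ => chi_nonneg _ _,
      fun _ x _ => le_rfl, ?_⟩
    apply nullSet_mono _ (nullSet_empty a b)
    rintro x ⟨hxI, hxn⟩
    exact absurd (seqConv_const _) hxn
  refine ⟨Set.Ioo u v, hEsub, hmeas, 1, one_pos, ?_⟩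
  intro m I hI
  rintro ⟨J, hJint, hJlt⟩
  set U : Set F := ⋃ i, ⋃ (_ : i < m), I i with hU
  set S : Set F := (Set.Ioo u v \ U) ∪ (U \ Set.Ioo u v) with hSdef
  have hmemU : ∀ x : F, x ∈ U ↔ ∃ j, j < m ∧ x ∈ I j := by
    intro x; simp [hU, Set.mem_iUnion]
  -- endpoints
  have hcd0 : ∀ i, ∃ c d : F, i < m → IsIntervalWith (I i) c d := by
    intro i
    by_cases h : i < m
    · obtain ⟨c, d, hc⟩ := (hI i h).1
      exact ⟨c, d, fun _ => hc⟩
    · exact ⟨0, 0, fun hc => absurd hc h⟩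
  choose cf df hcd using hcd0
  set T : Finset F := (((Finset.range m).image (fun i => max a (min (cf i) b))) ∪
      ((Finset.range m).image (fun i => max a (min (df i) b)))) ∪ {a, u, v, b} with hT
  have haT : a ∈ T := by simp [hT]
  have hbT : b ∈ T := by simp [hT]
  have huT : u ∈ T := by simp [hT]
  have hvT : v ∈ T := by simp [hT]
  have hcfT : ∀ j, j < m → max a (min (cf j) b) ∈ T := by
    intro j hj
    simp only [hT, Finset.mem_union]
    exact Or.inl (Or.inl (Finset.mem_image.mpr ⟨j, Finset.mem_range.mpr hj, rfl⟩))
  have hdfT : ∀ j, j < m → max a (min (df j) b) ∈ T := by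
    intro j hj
    simp only [hT, Finset.mem_union]
    exact Or.inl (Or.inr (Finset.mem_image.mpr ⟨j, Finset.mem_range.mpr hj, rfl⟩))
  have hTa : ∀ z ∈ T, a ≤ z := by
    intro z hz
    simp only [hT, Finset.mem_union, Finset.mem_image, Finset.mem_insert,
      Finset.mem_singleton] at hz
    rcases hz with (⟨i, _, rfl⟩ | ⟨i, _, rfl⟩) | (rfl | rfl | rfl | rfl)
    · exact le_max_left _ _
    · exact le_max_left _ _
    · exact le_rfl
    · exact hau.le
    · exact (hau.trans huv).le
    · exact hab.le
  have hTb : ∀ z ∈ T, z ≤ b := by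
    intro z hz
    simp only [hT, Finset.mem_union, Finset.mem_image, Finset.mem_insert,
      Finset.mem_singleton] at hz
    rcases hz with (⟨i, _, rfl⟩ | ⟨i, _, rfl⟩) | (rfl | rfl | rfl | rfl)
    · exact max_le hab.le (min_le_right _ _)
    · exact max_le hab.le (min_le_right _ _)
    · exact hab.le
    · exact (huv.trans hvb).le
    · exact hvb.le
    · exact le_rfl
  set N : ℕ := T.card - 1 with hNdef
  have hcard : 0 < T.card := Finset.card_pos.mpr ⟨a, haT⟩
  have hx0 : enum T 0 = a := enum_zero haT hTa
  have hxN : enum T N = b := enum_last hbT hTb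
  have hsc : ∀ i, i < N → i + 1 < T.card := fun i hi => by omega
  have hNltc : N < T.card := by omega
  -- slot congruence
  have hmaster : ∀ i, i + 1 < T.card →
      ∀ t ∈ Set.Ioo (enum T i) (enum T (i+1)), ∀ t' ∈ Set.Ioo (enum T i) (enum T (i+1)),
      ((t ∈ Set.Ioo u v ↔ t' ∈ Set.Ioo u v) ∧ (t ∈ U ↔ t' ∈ U)) := by
    intro i hi t ht t' ht'
    constructor
    · exact mem_intervalWith_congr (Or.inr (Or.inr (Or.inr rfl)))
        (enum_gapfree hi huT) (enum_gapfree hi hvT) ht ht'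
    · simp only [hmemU]
      constructor
      · rintro ⟨j, hj, hm⟩
        exact ⟨j, hj, (mem_intervalWith_congr (hcd j hj)
          (clip_avoid hi hTa hTb _ (hcfT j hj)) (clip_avoid hi hTa hTb _ (hdfT j hj))
          ht ht').mp hm⟩
      · rintro ⟨j, hj, hm⟩
        exact ⟨j, hj, (mem_intervalWith_congr (hcd j hj)
          (clip_avoid hi hTa hTb _ (hcfT j hj)) (clip_avoid hi hTa hTb _ (hdfT j hj))
          ht ht').mpr hm⟩
  have hSc : ∀ t t' : F, (t ∈ Set.Ioo u v ↔ t' ∈ Set.Ioo u v) → (t ∈ U ↔ t' ∈ U) →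
      (t ∈ S ↔ t' ∈ S) := by
    intro t t' h1 h2
    simp only [hSdef, Set.mem_union, Set.mem_diff]
    rw [h1, h2]
  have hmid : ∀ i, i + 1 < T.card →
      (enum T i + enum T (i+1)) / 2 ∈ Set.Ioo (enum T i) (enum T (i+1)) :=
    fun i hi => mid_mem_Ioo (enum_lt (Nat.lt_succ_self i) hi)
  -- constant values
  set Mf : F → ℕ → F := fun w i =>
    if ((enum T i + enum T (i+1)) / 2) ∈ Set.Ioo u v then w
    else chi S ((enum T i + enum T (i+1)) / 2) with hMf
  have hconst : ∀ w : F, ∀ i, i < N → ∀ t ∈ Set.Ioo (enum T i) (enum T (i+1)),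
      (if t ∈ Set.Ioo u v then w else chi S t) = Mf w i := by
    intro w i hi t ht
    have hi' := hsc i hi
    have hmid' := hmid i hi'
    have hEc := (hmaster i hi' t ht _ hmid').1
    have hUc := (hmaster i hi' t ht _ hmid').2
    simp only [hMf]
    by_cases hm : ((enum T i + enum T (i+1)) / 2) ∈ Set.Ioo u v
    · rw [if_pos hm, if_pos (hEc.mpr hm)]
    · rw [if_neg hm, if_neg (fun hc => hm (hEc.mp hc))]
      exact chi_congr (hSc _ _ hEc hUc)
  have hφstep : ∀ w : F, IsStepOn a b (fun x => if x ∈ Set.Ioo u v then w else chi S x) := by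
    intro w
    exact ⟨N, enum T, hx0, hxN, fun i hi => enum_lt (Nat.lt_succ_self i) (hsc i hi),
      fun i hi => ⟨Mf w i, hconst w i hi⟩⟩
  have hφapprox : ∀ w : F, 0 ≤ w →
      ApproxSeq a b (fun _ x => if x ∈ Set.Ioo u v then w else chi S x) (chi S) := by
    intro w hw
    refine ⟨fun _ => hφstep w, fun n x _ => ?_, fun n x _ => le_rfl, ?_⟩
    · by_cases hm : x ∈ Set.Ioo u v
      · simpa [hm] using hw
      · simpa [hm] using chi_nonneg S x
    · apply nullSet_mono _ hN
      rintro x ⟨hxI, hxn⟩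
      by_contra hxE
      apply hxn
      have he : (if x ∈ Set.Ioo u v then w else chi S x) = chi S x := if_neg hxE
      simp only [he]
      exact seqConv_const _
  have hφint : ∀ w : F, HasStepIntegral a b (fun x => if x ∈ Set.Ioo u v then w else chi S x)
      (∑ i ∈ Finset.range N, Mf w i * (enum T (i+1) - enum T i)) :=
    fun w => ⟨N, enum T, Mf w, hx0, hxN,
      fun i hi => enum_lt (Nat.lt_succ_self i) (hsc i hi), hconst w, rfl⟩
  -- apply the integral hypothesis to both sequences
  have h0 : J = ∑ i ∈ Finset.range N, Mf 0 i * (enum T (i+1) - enum T i) :=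
    (seqConv_const_eq (hJint.2 _ (hφapprox 0 le_rfl) _ (fun _ => hφint 0))).symm
  have h1 : J = ∑ i ∈ Finset.range N, Mf 1 i * (enum T (i+1) - enum T i) :=
    (seqConv_const_eq (hJint.2 _ (hφapprox 1 zero_le_one) _ (fun _ => hφint 1))).symm
  -- compute the difference
  obtain ⟨ku, hku, hkue⟩ := enum_surj huT
  obtain ⟨kv, hkv, hkve⟩ := enum_surj hvT
  have hkulv : ku < kv := enum_lt_reflect hku hkv (by rw [hkue, hkve]; exact huv)
  have hkvN : kv < N := by
    have := enum_lt_reflect hkv hNltc (by rw [hkve, hxN]; exact hvb)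
    omega
  have hterm : ∀ i ∈ Finset.range N,
      Mf 1 i * (enum T (i+1) - enum T i) - Mf 0 i * (enum T (i+1) - enum T i)
      = if i ∈ Finset.Ico ku kv then (enum T (i+1) - enum T i) else 0 := by
    intro i hiR
    have hi : i < N := Finset.mem_range.mp hiR
    have hi' := hsc i hi
    have hmid' := hmid i hi'
    by_cases hm : ((enum T i + enum T (i+1)) / 2) ∈ Set.Ioo u v
    · have hui : ku ≤ i := by
        have hunot := enum_gapfree hi' huT
        have : u ≤ enum T i := by
          rcases lt_or_ge (enum T i) u with hl | hl
          · exfalso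
            apply hunot
            refine ⟨hl, ?_⟩
            calc u < (enum T i + enum T (i+1)) / 2 := hm.1
              _ < enum T (i+1) := hmid'.2
          · exact hl
        exact enum_le_reflect hku (by omega) (by rw [hkue]; exact this)
      have hvi : i + 1 ≤ kv := by
        have hvnot := enum_gapfree hi' hvT
        have : enum T (i+1) ≤ v := by
          rcases lt_or_ge v (enum T (i+1)) with hl | hl
          · exfalso
            apply hvnot
            refine ⟨?_, hl⟩
            calc enum T i < (enum T i + enum T (i+1)) / 2 := hmid'.1
              _ < v := hm.2
          · exact hl
        exact enum_le_reflect hi' hkv (by rw [hkve]; exact this)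
      rw [if_pos (Finset.mem_Ico.mpr ⟨hui, by omega⟩)]
      simp only [hMf, if_pos hm]
      ring
    · have hnotin : i ∉ Finset.Ico ku kv := by
        intro hin
        rw [Finset.mem_Ico] at hin
        apply hm
        constructor
        · calc u = enum T ku := hkue.symm
            _ ≤ enum T i := enum_le hin.1 (by omega)
            _ < (enum T i + enum T (i+1)) / 2 := hmid'.1
        · calc (enum T i + enum T (i+1)) / 2 < enum T (i+1) := hmid'.2
            _ ≤ enum T kv := enum_le (by omega) hkv
            _ = v := hkve
      rw [if_neg hnotin]
      simp only [hMf, if_neg hm]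
      ring
  have htele : ∑ i ∈ Finset.Ico ku kv, (enum T (i+1) - enum T i) = v - u := by
    rw [Finset.sum_Ico_eq_sub _ hkulv.le, Finset.sum_range_sub (enum T),
      Finset.sum_range_sub (enum T), hkue, hkve]
    ring
  have hdiff : (∑ i ∈ Finset.range N, Mf 1 i * (enum T (i+1) - enum T i))
      - (∑ i ∈ Finset.range N, Mf 0 i * (enum T (i+1) - enum T i)) = v - u := by
    rw [← Finset.sum_sub_distrib, Finset.sum_congr rfl hterm, ← Finset.sum_filter]
    have hfe : (Finset.range N).filter (fun i => i ∈ Finset.Ico ku kv) = Finset.Ico ku kv := by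
      ext i
      simp only [Finset.mem_filter, Finset.mem_range, Finset.mem_Ico]
      omega
    rw [hfe, htele]
  rw [← h0, ← h1] at hdiff
  simp at hdiff
  linarith
end CaseA
section CutLemmas
variable {F : Type*} [Field F] [LinearOrder F] [IsStrictOrderedRing F]
open Set

lemma cut_mem_of_le {A : Set F} (hcut : ∀ x ∈ A, ∀ y ∉ A, x < y) {x z : F}
    (hx : x ∈ A) (hz : z ≤ x) : z ∈ A := by
  by_contra h
  exact absurd (hcut x hx z h) (not_lt.mpr hz)

lemma cut_no_max {A : Set F} (hcut : ∀ x ∈ A, ∀ y ∉ A, x < y)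
    (hnocut : ∀ c : F, ¬ IsCutPoint A c) {x : F} (hx : x ∈ A) : ∃ x' ∈ A, x < x' := by
  by_contra h
  push_neg at h
  apply hnocut x
  intro p hp y hy
  exact ⟨h p hp, (hcut x hx y hy).le⟩

lemma cut_no_min {A : Set F} (hcut : ∀ x ∈ A, ∀ y ∉ A, x < y)
    (hnocut : ∀ c : F, ¬ IsCutPoint A c) {y : F} (hy : y ∉ A) :
    ∃ y', y' ∉ A ∧ y' < y := by
  by_contra h
  push_neg at h
  apply hnocut y
  intro p hp z hz
  exact ⟨(hcut p hp y hy).le, h z hz⟩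

lemma isStepOn_of_hasStepIntegral {a b : F} {φ : F → F} {I : F}
    (h : HasStepIntegral a b φ I) : IsStepOn a b φ := by
  obtain ⟨n, x, M, h1, h2, h3, h4, _⟩ := h
  exact ⟨n, x, h1, h2, h3, fun i hi => ⟨M i, h4 i hi⟩⟩

end CutLemmas
section CaseB
variable {F : Type*} [Field F] [LinearOrder F] [IsStrictOrderedRing F]
open Set Finset

lemma caseB_main {A : Set F} {a b : F} (ha : a ∈ A) (hb : b ∉ A)
    (hcut : ∀ x ∈ A, ∀ y ∉ A, x < y) (hnocut : ∀ c : F, ¬ IsCutPoint A c)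
    {t : ℕ → F} (htA : ∀ n, t n ∈ A) (htm : ∀ n, t n ≤ t (n + 1))
    (htc : ∀ x ∈ A, ∃ n, x ≤ t n)
    (hB : ∀ u v : F, a < u → u < v → v < b → ¬ NullSet a b (Set.Ioo u v)) :
    ∃ E ⊆ Set.Icc a b, MeasSet a b E ∧ ∃ ε : F, 0 < ε ∧
      ∀ (m : ℕ) (I : ℕ → Set F), (∀ i < m, IsInterval (I i) ∧ I i ⊆ Set.Icc a b) →
        ¬ ∃ J : F, HasLebIntegralNN a b
            (chi ((E \ ⋃ i < m, I i) ∪ ((⋃ i < m, I i) \ E))) J ∧ J < ε := by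
  classical
  have hab : a < b := hcut a ha b hb
  set E : Set F := {x ∈ Set.Icc a b | x ∉ A} with hEdef
  have hEsub : E ⊆ Set.Icc a b := fun x hx => hx.1
  -- the fixed increasing ladder, pulled strictly above `a`
  obtain ⟨a2, ha2A, ha2⟩ := cut_no_max hcut hnocut ha
  set w0 : ℕ → F := fun n => max (t n) a2 with hw0
  have hw0A : ∀ n, w0 n ∈ A := by
    intro n
    rcases max_cases (t n) a2 with ⟨he, _⟩ | ⟨he, _⟩ <;> rw [hw0] <;> simp only [he]
    exacts [htA n, ha2A]
  have hw0gt : ∀ n, a < w0 n := fun n => lt_of_lt_of_le ha2 (le_max_right _ _)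
  have hw0lt : ∀ n, w0 n < b := fun n => hcut _ (hw0A n) b hb
  have hw0m : ∀ n, w0 n ≤ w0 (n + 1) := fun n => max_le_max_right _ (htm n)
  have hw0c : ∀ x ∈ A, ∃ n, x ≤ w0 n := by
    intro x hx
    obtain ⟨n, hn⟩ := htc x hx
    exact ⟨n, hn.trans (le_max_left _ _)⟩
  have hmeasE : MeasSet a b E := by
    refine ⟨fun n x => if w0 n < x then 1 else 0, ?_, ?_, ?_, ?_⟩
    · intro n
      refine ⟨2, fun i => if i = 0 then a else if i = 1 then w0 n else b, rfl, rfl, ?_, ?_⟩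
      · intro i hi
        interval_cases i
        · simpa using hw0gt n
        · simpa using hw0lt n
      · intro i hi
        interval_cases i
        · refine ⟨0, fun s hs => if_neg ?_⟩
          simp only [show (0:ℕ) ≠ 1 by norm_num] at hs
          simp at hs
          exact not_lt.mpr hs.2.le
        · refine ⟨1, fun s hs => if_pos ?_⟩
          simp at hs
          exact hs.1
    · intro n x _
      by_cases h : w0 n < x <;> simp [h]
    · intro n x _
      by_cases h2 : w0 (n + 1) < x
      · have h1 : w0 n < x := lt_of_le_of_lt (hw0m n) h2
        simp [h1, h2]
      · by_cases h1 : w0 n < x <;> simp [h1, h2]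
    · apply nullSet_mono _ (nullSet_empty a b)
      rintro x ⟨hxI, hxn⟩
      exfalso
      apply hxn
      by_cases hxA : x ∈ A
      · have hchi : chi E x = 0 := chi_of_not_mem (fun hE => hE.2 hxA)
        rw [hchi]
        obtain ⟨n0, hn0⟩ := hw0c x hxA
        refine seqConv_of_eventually ⟨n0, fun n hn => if_neg (not_lt.mpr ?_)⟩
        exact hn0.trans (monotone_of_succ hw0m hn)
      · have hchi : chi E x = 1 := chi_of_mem ⟨hxI, hxA⟩
        rw [hchi]
        refine seqConv_of_eventually ⟨0, fun n _ => if_pos ?_⟩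
        exact hcut _ (hw0A n) x hxA
  refine ⟨E, hEsub, hmeasE, 1, one_pos, ?_⟩
  intro m I hI
  rintro ⟨J, hJint, hJlt⟩
  set U : Set F := ⋃ i, ⋃ (_ : i < m), I i with hU
  set S : Set F := (E \ U) ∪ (U \ E) with hSdef
  have hmemU : ∀ x : F, x ∈ U ↔ ∃ j, j < m ∧ x ∈ I j := by
    intro x; simp [hU, Set.mem_iUnion]
  have hcd0 : ∀ i, ∃ c d : F, i < m → IsIntervalWith (I i) c d := by
    intro i
    by_cases h : i < m
    · obtain ⟨c, d, hc⟩ := (hI i h).1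
      exact ⟨c, d, fun _ => hc⟩
    · exact ⟨0, 0, fun hc => absurd hc h⟩
  choose cf df hcd using hcd0
  set Tend : Finset F := (((Finset.range m).image (fun i => max a (min (cf i) b))) ∪
      ((Finset.range m).image (fun i => max a (min (df i) b)))) ∪ {a, b} with hTend
  have haTe : a ∈ Tend := by simp [hTend]
  have hbTe : b ∈ Tend := by simp [hTend]
  have hcfT : ∀ j, j < m → max a (min (cf j) b) ∈ Tend := by
    intro j hj
    simp only [hTend, Finset.mem_union]
    exact Or.inl (Or.inl (Finset.mem_image.mpr ⟨j, Finset.mem_range.mpr hj, rfl⟩))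
  have hdfT : ∀ j, j < m → max a (min (df j) b) ∈ Tend := by
    intro j hj
    simp only [hTend, Finset.mem_union]
    exact Or.inl (Or.inr (Finset.mem_image.mpr ⟨j, Finset.mem_range.mpr hj, rfl⟩))
  have hTea : ∀ z ∈ Tend, a ≤ z := by
    intro z hz
    simp only [hTend, Finset.mem_union, Finset.mem_image, Finset.mem_insert,
      Finset.mem_singleton] at hz
    rcases hz with (⟨i, _, rfl⟩ | ⟨i, _, rfl⟩) | (rfl | rfl)
    · exact le_max_left _ _
    · exact le_max_left _ _
    · exact le_rfl
    · exact hab.le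
  have hTeb : ∀ z ∈ Tend, z ≤ b := by
    intro z hz
    simp only [hTend, Finset.mem_union, Finset.mem_image, Finset.mem_insert,
      Finset.mem_singleton] at hz
    rcases hz with (⟨i, _, rfl⟩ | ⟨i, _, rfl⟩) | (rfl | rfl)
    · exact max_le hab.le (min_le_right _ _)
    · exact max_le hab.le (min_le_right _ _)
    · exact hab.le
    · exact le_rfl
  -- window construction
  set TA : Finset F := Tend.filter (· ∈ A) with hTA
  have hTAne : TA.Nonempty := ⟨a, by simp [hTA, haTe, ha]⟩
  set μ : F := TA.max' hTAne with hμ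
  have hμA : μ ∈ A := (Finset.mem_filter.mp (TA.max'_mem hTAne)).2
  obtain ⟨p, hpA, hμp⟩ := cut_no_max hcut hnocut hμA
  obtain ⟨p2, hp2A, hpp2⟩ := cut_no_max hcut hnocut hpA
  set TB : Finset F := Tend.filter (· ∉ A) with hTB
  have hTBne : TB.Nonempty := ⟨b, by simp [hTB, hbTe, hb]⟩
  set ν : F := TB.min' hTBne with hν
  have hνB : ν ∉ A := (Finset.mem_filter.mp (TB.min'_mem hTBne)).2
  obtain ⟨q, hqB, hqν⟩ := cut_no_min hcut hnocut hνB
  obtain ⟨q2, hq2B, hq2q⟩ := cut_no_min hcut hnocut hqB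
  have hap : a < p := lt_of_le_of_lt (TA.le_max' a (by simp [hTA, haTe, ha])) hμp
  have hqb : q < b := lt_of_lt_of_le hqν (TB.min'_le b (by simp [hTB, hbTe, hb]))
  have hpq : p < q := hcut p hpA q hqB
  have hp2q : p2 < q := hcut p2 hp2A q hqB
  have hp2q2 : p2 < q2 := hcut p2 hp2A q2 hq2B
  have hpq2 : p < q2 := hcut p hpA q2 hq2B
  have hTeA : ∀ z ∈ Tend, z ∈ A → z ≤ μ := fun z hz hzA =>
    TA.le_max' z (by simp [hTA, hz, hzA])
  have hTeB : ∀ z ∈ Tend, z ∉ A → ν ≤ z := fun z hz hzB =>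
    TB.min'_le z (by simp [hTB, hz, hzB])
  set T : Finset F := Tend ∪ {p, q} with hT
  have hpT : p ∈ T := by simp [hT]
  have hqT : q ∈ T := by simp [hT]
  have haT : a ∈ T := by simp [hT, haTe]
  have hbT : b ∈ T := by simp [hT, hbTe]
  have hTa : ∀ z ∈ T, a ≤ z := by
    intro z hz
    rcases Finset.mem_union.mp hz with h | h
    · exact hTea z h
    · rcases Finset.mem_insert.mp h with h | h
      · rw [h]; exact hap.le
      · rw [Finset.mem_singleton.mp h]
        exact (hcut a ha q hqB).le
  have hTb : ∀ z ∈ T, z ≤ b := by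
    intro z hz
    rcases Finset.mem_union.mp hz with h | h
    · exact hTeb z h
    · rcases Finset.mem_insert.mp h with h | h
      · rw [h]; exact (hcut p hpA b hb).le
      · rw [Finset.mem_singleton.mp h]
        exact hqb.le
  have hTwin : ∀ z ∈ T, z ∉ Set.Ioo p q := by
    intro z hz
    rcases Finset.mem_union.mp hz with h | h
    · by_cases hzA : z ∈ A
      · rintro ⟨h1, _⟩
        exact absurd ((hTeA z h hzA).trans_lt hμp) (not_lt.mpr h1.le)
      · rintro ⟨_, h2⟩
        exact absurd (hqν.trans_le (hTeB z h hzA)) (not_lt.mpr h2.le)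
    · rcases Finset.mem_insert.mp h with h | h
      · rw [h]; rintro ⟨h1, _⟩; exact lt_irrefl _ h1
      · rw [Finset.mem_singleton.mp h]
        rintro ⟨_, h2⟩; exact lt_irrefl _ h2
  obtain ⟨k, hk1, hkp, hkq⟩ := enum_adjacent hpT hqT hpq hTwin
  set N : ℕ := T.card with hNdef
  have hcard : 0 < T.card := Finset.card_pos.mpr ⟨a, haT⟩
  have hx0 : enum T 0 = a := enum_zero haT hTa
  have hxlast : enum T (T.card - 1) = b := enum_last hbT hTb
  have hkN : k + 1 < N := hk1
  have hkNe : k + 1 ≠ T.card - 1 := by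
    intro h
    rw [← h] at hxlast
    rw [hxlast] at hkq
    exact absurd hkq.symm (ne_of_lt hqb)
  have hk2N : k + 2 ≤ T.card - 1 := by omega
  -- moving partition
  set xpt : F → ℕ → F := fun w i =>
    if i ≤ k then enum T i else if i = k + 1 then w else enum T (i - 1) with hxpt
  set ylo : ℕ → F := fun i => if i ≤ k then enum T i else enum T (i - 1) with hylo
  set yhi : ℕ → F := fun i => if i ≤ k then enum T (i + 1) else enum T i with hyhi
  have hxpt0 : ∀ w : F, xpt w 0 = a := by
    intro w
    show (if 0 ≤ k then enum T 0 else _) = a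
    rw [if_pos (Nat.zero_le k)]
    exact hx0
  have hxptN : ∀ w : F, xpt w N = b := by
    intro w
    show (if N ≤ k then _ else if N = k + 1 then w else enum T (N - 1)) = b
    rw [if_neg (by omega : ¬ N ≤ k), if_neg (by omega : ¬ N = k + 1)]
    have h3 : N - 1 = T.card - 1 := by omega
    rw [h3, hxlast]
  have hxpteq : ∀ (w : F) (i : ℕ), i ≠ k → i ≠ k + 1 →
      xpt w i = ylo i ∧ xpt w (i + 1) = yhi i := by
    intro w i h1 h2
    constructor
    · show (if i ≤ k then enum T i else if i = k + 1 then w else enum T (i - 1))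
        = (if i ≤ k then enum T i else enum T (i - 1))
      by_cases h : i ≤ k
      · rw [if_pos h, if_pos h]
      · rw [if_neg h, if_neg h, if_neg h2]
    · show (if i + 1 ≤ k then enum T (i + 1) else if i + 1 = k + 1 then w else enum T (i + 1 - 1))
        = (if i ≤ k then enum T (i + 1) else enum T i)
      by_cases h : i ≤ k
      · have h' : i < k := lt_of_le_of_ne h h1
        rw [if_pos (by omega : i + 1 ≤ k), if_pos h]
      · rw [if_neg (by omega : ¬ i + 1 ≤ k), if_neg (by omega : ¬ i + 1 = k + 1),
          if_neg h, Nat.add_sub_cancel]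
  have hxptk : ∀ w : F, xpt w k = p ∧ xpt w (k + 1) = w := by
    intro w
    constructor
    · show (if k ≤ k then enum T k else _) = p
      rw [if_pos le_rfl, hkp]
    · show (if k + 1 ≤ k then _ else if k + 1 = k + 1 then w else _) = w
      rw [if_neg (by omega : ¬ k + 1 ≤ k), if_pos rfl]
  have hxptk2 : ∀ w : F, xpt w (k + 2) = q := by
    intro w
    show (if k + 2 ≤ k then _ else if k + 2 = k + 1 then w else enum T (k + 2 - 1)) = q
    rw [if_neg (by omega : ¬ k + 2 ≤ k), if_neg (by omega : ¬ k + 2 = k + 1)]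
    have h3 : k + 2 - 1 = k + 1 := by omega
    rw [h3, hkq]
  have hyloeq : ∀ i, i ≤ k → ylo i = enum T i := by
    intro i h
    show (if i ≤ k then _ else _) = _
    rw [if_pos h]
  have hyhieq : ∀ i, i ≤ k → yhi i = enum T (i + 1) := by
    intro i h
    show (if i ≤ k then _ else _) = _
    rw [if_pos h]
  have hyloeq' : ∀ i, ¬ i ≤ k → ylo i = enum T (i - 1) := by
    intro i h
    show (if i ≤ k then _ else _) = _
    rw [if_neg h]
  have hyhieq' : ∀ i, ¬ i ≤ k → yhi i = enum T i := by
    intro i h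
    show (if i ≤ k then _ else _) = _
    rw [if_neg h]
  have hylt : ∀ i, i < N → i ≠ k → i ≠ k + 1 → ylo i < yhi i := by
    intro i hi h1 h2
    by_cases h : i ≤ k
    · rw [hyloeq i h, hyhieq i h]
      exact enum_lt (Nat.lt_succ_self i) (by omega)
    · rw [hyloeq' i h, hyhieq' i h]
      exact enum_lt (by omega) (by omega)
  have hxm : ∀ w ∈ Set.Ioo p q, ∀ i, i < N → xpt w i < xpt w (i + 1) := by
    intro w hw i hi
    by_cases h1 : i = k
    · rw [h1, (hxptk w).1, (hxptk w).2]
      exact hw.1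
    · by_cases h2 : i = k + 1
      · subst h2
        rw [(hxptk w).2]
        rw [(rfl : k + 1 + 1 = k + 2), hxptk2 w]
        exact hw.2
      · obtain ⟨e1, e2⟩ := hxpteq w i h1 h2
        rw [e1, e2]
        exact hylt i hi h1 h2
  have hUslot : ∀ i, i + 1 < T.card → ∀ s1 ∈ Set.Ioo (enum T i) (enum T (i+1)),
      ∀ s2 ∈ Set.Ioo (enum T i) (enum T (i+1)), (s1 ∈ U ↔ s2 ∈ U) := by
    intro i hi s1 hs1 s2 hs2
    simp only [hmemU]
    constructor
    · rintro ⟨j, hj, hm⟩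
      exact ⟨j, hj, (mem_intervalWith_congr (hcd j hj)
        (clip_avoid hi hTa hTb _ (Finset.mem_union.mpr (Or.inl (hcfT j hj))))
        (clip_avoid hi hTa hTb _ (Finset.mem_union.mpr (Or.inl (hdfT j hj)))) hs1 hs2).mp hm⟩
    · rintro ⟨j, hj, hm⟩
      exact ⟨j, hj, (mem_intervalWith_congr (hcd j hj)
        (clip_avoid hi hTa hTb _ (Finset.mem_union.mpr (Or.inl (hcfT j hj))))
        (clip_avoid hi hTa hTb _ (Finset.mem_union.mpr (Or.inl (hdfT j hj)))) hs1 hs2).mpr hm⟩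
  have hSc : ∀ s1 s2 : F, (s1 ∈ E ↔ s2 ∈ E) → (s1 ∈ U ↔ s2 ∈ U) → (s1 ∈ S ↔ s2 ∈ S) := by
    intro s1 s2 h1 h2
    rw [hSdef]
    simp only [Set.mem_union, Set.mem_diff]
    rw [h1, h2]
  have hbase : ∀ i, i < N → i ≠ k → i ≠ k + 1 →
      ∀ s1 ∈ Set.Ioo (ylo i) (yhi i), ∀ s2 ∈ Set.Ioo (ylo i) (yhi i), chi S s1 = chi S s2 := by
    intro i hi h1 h2 s1 hs1 s2 hs2
    by_cases h : i ≤ k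
    · have hik : i < k := lt_of_le_of_ne h h1
      rw [hyloeq i h, hyhieq i h] at hs1 hs2
      have hi2 : i + 1 < T.card := by omega
      have hmem : ∀ s ∈ Set.Ioo (enum T i) (enum T (i+1)), s ∈ A := by
        intro s hs
        have hsp : s < p := by
          calc s < enum T (i+1) := hs.2
            _ ≤ enum T k := enum_le (by omega) (by omega)
            _ = p := hkp
        exact cut_mem_of_le hcut hpA hsp.le
      exact chi_congr (hSc s1 s2
        (iff_of_false (fun hE => hE.2 (hmem s1 hs1)) (fun hE => hE.2 (hmem s2 hs2)))
        (hUslot i hi2 s1 hs1 s2 hs2))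
    · have hik : k + 2 ≤ i := by omega
      rw [hyloeq' i h, hyhieq' i h] at hs1 hs2
      have hi2 : (i - 1) + 1 < T.card := by omega
      have hrw : i - 1 + 1 = i := by omega
      have hmem : ∀ s ∈ Set.Ioo (enum T (i-1)) (enum T i), s ∈ E := by
        intro s hs
        have hqs : q ≤ enum T (i - 1) := by
          rw [← hkq]
          exact enum_le (by omega) (by omega)
        have hsA : s ∉ A := by
          intro hsA
          exact absurd (hcut s hsA q hqB) (not_lt.mpr (hqs.trans hs.1.le))
        refine ⟨⟨?_, ?_⟩, hsA⟩
        · exact ((hcut a ha q hqB).trans_le (hqs.trans hs.1.le)).le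
        · exact (hs.2.trans_le (hTb _ (enum_mem (by omega : i < T.card)))).le
      have hs1' : s1 ∈ Set.Ioo (enum T (i-1)) (enum T (i - 1 + 1)) := by rw [hrw]; exact hs1
      have hs2' : s2 ∈ Set.Ioo (enum T (i-1)) (enum T (i - 1 + 1)) := by rw [hrw]; exact hs2
      exact chi_congr (hSc s1 s2
        (iff_of_true (hmem s1 hs1) (hmem s2 hs2))
        (hUslot (i-1) hi2 s1 hs1' s2 hs2'))
  have hUwin : ∀ s1 ∈ Set.Ioo p q, ∀ s2 ∈ Set.Ioo p q, (s1 ∈ U ↔ s2 ∈ U) := by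
    intro s1 hs1 s2 hs2
    rw [← hkp, ← hkq] at hs1 hs2
    exact hUslot k hk1 s1 hs1 s2 hs2
  have hwinIcc : Set.Ioo p q ⊆ Set.Icc a b :=
    fun x hx => ⟨(hap.trans hx.1).le, (hx.2.trans hqb).le⟩
  have hp2win : p2 ∈ Set.Ioo p q := ⟨hpp2, hp2q⟩
  have hSwinA : ∀ x ∈ Set.Ioo p q, x ∈ A → (x ∈ S ↔ p2 ∈ U) := by
    intro x hx hxA
    have hU' : x ∈ U ↔ p2 ∈ U := hUwin x hx p2 hp2win
    have hxE : x ∉ E := fun hE => hE.2 hxA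
    rw [hSdef]
    simp only [Set.mem_union, Set.mem_diff]
    constructor
    · rintro (⟨hE, _⟩ | ⟨hUm, _⟩)
      · exact absurd hE hxE
      · exact hU'.mp hUm
    · intro h
      exact Or.inr ⟨hU'.mpr h, hxE⟩
  have hSwinB : ∀ x ∈ Set.Ioo p q, x ∉ A → (x ∈ S ↔ p2 ∉ U) := by
    intro x hx hxA
    have hU' : x ∈ U ↔ p2 ∈ U := hUwin x hx p2 hp2win
    have hxE : x ∈ E := ⟨hwinIcc hx, hxA⟩
    rw [hSdef]
    simp only [Set.mem_union, Set.mem_diff]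
    constructor
    · rintro (⟨_, hUm⟩ | ⟨hUm, hEm⟩)
      · exact fun hh => hUm (hU'.mpr hh)
      · exact absurd hxE hEm
    · intro h
      exact Or.inl ⟨hxE, fun hUm => h (hU'.mp hUm)⟩
  set Mb : ℕ → F := fun i => chi S ((ylo i + yhi i) / 2) with hMbdef
  set Δb : ℕ → F := fun i => yhi i - ylo i with hΔbdef
  set Cb : F := ∑ i ∈ ((Finset.range N).erase (k+1)).erase k, Mb i * Δb i with hCbdef
  set Mg : F → F → ℕ → F := fun lv rv i => if i = k then lv else if i = k + 1 then rv else Mb i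
    with hMg
  have hMgk : ∀ lv rv : F, Mg lv rv k = lv := by
    intro lv rv
    show (if k = k then lv else _) = lv
    rw [if_pos rfl]
  have hMgk1 : ∀ lv rv : F, Mg lv rv (k + 1) = rv := by
    intro lv rv
    show (if k + 1 = k then lv else if k + 1 = k + 1 then rv else _) = rv
    rw [if_neg (by omega : ¬ k + 1 = k), if_pos rfl]
  have hMgelse : ∀ lv rv : F, ∀ i, i ≠ k → i ≠ k + 1 → Mg lv rv i = Mb i := by
    intro lv rv i h1 h2
    show (if i = k then lv else if i = k + 1 then rv else Mb i) = Mb i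
    rw [if_neg h1, if_neg h2]
  have hks : k ∈ (Finset.range N).erase (k + 1) :=
    Finset.mem_erase.mpr ⟨by omega, Finset.mem_range.mpr (by omega)⟩
  have hk1s : k + 1 ∈ Finset.range N := Finset.mem_range.mpr hk1
  have hSIgen : ∀ w ∈ Set.Ioo p q, ∀ g : F → F, ∀ lv rv : F,
      (∀ x ∈ Set.Ioo p w, g x = lv) → (∀ x ∈ Set.Ioo w q, g x = rv) →
      HasStepIntegral a b (fun x => if p < x ∧ x < q then g x else chi S x)
        (Cb + (lv * (w - p) + rv * (q - w))) := by
    intro w hw g lv rv hgl hgr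
    refine ⟨N, xpt w, Mg lv rv, hxpt0 w, hxptN w, hxm w hw, ?_, ?_⟩
    · intro i hi s hs
      by_cases h1 : i = k
      · subst h1
        rw [(hxptk w).1, (hxptk w).2] at hs
        rw [hMgk]
        have hsw : p < s ∧ s < q := ⟨hs.1, hs.2.trans hw.2⟩
        show (if p < s ∧ s < q then g s else chi S s) = lv
        rw [if_pos hsw]
        exact hgl s hs
      · by_cases h2 : i = k + 1
        · subst h2
          rw [(hxptk w).2, (rfl : k + 1 + 1 = k + 2), hxptk2 w] at hs
          rw [hMgk1]
          have hsw : p < s ∧ s < q := ⟨hw.1.trans hs.1, hs.2⟩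
          show (if p < s ∧ s < q then g s else chi S s) = rv
          rw [if_pos hsw]
          exact hgr s hs
        · obtain ⟨e1, e2⟩ := hxpteq w i h1 h2
          rw [e1, e2] at hs
          rw [hMgelse lv rv i h1 h2]
          have hout : ¬ (p < s ∧ s < q) := by
            by_cases h : i ≤ k
            · have hsp : s < p := by
                have h3 := hs.2
                rw [hyhieq i h] at h3
                calc s < enum T (i + 1) := h3
                  _ ≤ enum T k := enum_le (by omega) (by omega)
                  _ = p := hkp
              exact fun hc => absurd (hc.1.trans hsp) (lt_irrefl p)
            · have hqs : q < s := by
                have h3 := hs.1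
                rw [hyloeq' i h] at h3
                calc q = enum T (k + 1) := hkq.symm
                  _ ≤ enum T (i - 1) := enum_le (by omega) (by omega)
                  _ < s := h3
              exact fun hc => absurd (hqs.trans hc.2) (lt_irrefl q)
          show (if p < s ∧ s < q then g s else chi S s) = Mb i
          rw [if_neg hout]
          exact hbase i hi h1 h2 s hs _ (mid_mem_Ioo (hylt i hi h1 h2))
    · have hsc : ∑ i ∈ ((Finset.range N).erase (k + 1)).erase k,
          Mg lv rv i * (xpt w (i + 1) - xpt w i) = Cb := by
        rw [hCbdef]
        refine Finset.sum_congr rfl ?_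
        intro i hi
        obtain ⟨hik, hi'⟩ := Finset.mem_erase.mp hi
        obtain ⟨hik1, _⟩ := Finset.mem_erase.mp hi'
        obtain ⟨e1, e2⟩ := hxpteq w i hik hik1
        rw [hMgelse lv rv i hik hik1, e1, e2]
      calc Cb + (lv * (w - p) + rv * (q - w))
          = (∑ i ∈ ((Finset.range N).erase (k + 1)).erase k,
              Mg lv rv i * (xpt w (i + 1) - xpt w i))
            + Mg lv rv k * (xpt w (k + 1) - xpt w k)
            + Mg lv rv (k + 1) * (xpt w (k + 1 + 1) - xpt w (k + 1)) := by
            rw [hsc, hMgk, hMgk1, (hxptk w).1, (hxptk w).2,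
              (rfl : k + 1 + 1 = k + 2), hxptk2 w]
            ring
        _ = (∑ i ∈ (Finset.range N).erase (k + 1),
              Mg lv rv i * (xpt w (i + 1) - xpt w i))
            + Mg lv rv (k + 1) * (xpt w (k + 1 + 1) - xpt w (k + 1)) := by
            rw [Finset.sum_erase_add _ _ hks]
        _ = ∑ i ∈ Finset.range N, Mg lv rv i * (xpt w (i + 1) - xpt w i) := by
            rw [Finset.sum_erase_add _ _ hk1s]
  by_cases hu : p2 ∈ U
  · -- the union covers the window: `chi S` is 1 on the `A`-side, 0 on the other side
    by_cases hlad : ∃ r : ℕ → F, (∀ n, r n ∉ A) ∧ ∀ y, y ∉ A → ∃ n, r n ≤ y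
    · -- a decreasing coinitial ladder from above exists: constructive contradiction
      obtain ⟨r, hrB, hrc⟩ := hlad
      set rm : ℕ → F := fun n => Nat.rec (r 0) (fun kk acc => min acc (r (kk + 1))) n with hrm
      have hrmsucc : ∀ n, rm (n + 1) = min (rm n) (r (n + 1)) := fun n => rfl
      have hrmB : ∀ n, rm n ∉ A := by
        intro n
        induction n with
        | zero => exact hrB 0
        | succ n ih =>
          rw [hrmsucc]
          rcases min_cases (rm n) (r (n + 1)) with ⟨he, _⟩ | ⟨he, _⟩ <;> rw [he]
          exacts [ih, hrB (n + 1)]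
      have hrmm : ∀ n, rm (n + 1) ≤ rm n := fun n => by rw [hrmsucc]; exact min_le_left _ _
      have hrmle : ∀ n, rm n ≤ r n := by
        intro n
        cases n with
        | zero => exact le_rfl
        | succ n => rw [hrmsucc]; exact min_le_right _ _
      set sq : ℕ → F := fun n => min (rm n) q2 with hsq
      have hsqB : ∀ n, sq n ∉ A := by
        intro n
        show min (rm n) q2 ∉ A
        rcases min_cases (rm n) q2 with ⟨he, _⟩ | ⟨he, _⟩ <;> rw [he]
        exacts [hrmB n, hq2B]
      have hsqdec : ∀ n, sq (n + 1) ≤ sq n := fun n => min_le_min (hrmm n) le_rfl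
      have hsqwin : ∀ n, sq n ∈ Set.Ioo p q :=
        fun n => ⟨hcut p hpA _ (hsqB n), lt_of_le_of_lt (min_le_right _ _) hq2q⟩
      have hsqc : ∀ y, y ∉ A → ∃ n, sq n ≤ y := by
        intro y hy
        obtain ⟨n, hn⟩ := hrc y hy
        exact ⟨n, (min_le_left _ _).trans ((hrmle n).trans hn)⟩
      set φ : ℕ → F → F :=
        fun n x => if p < x ∧ x < q then (if x < sq n then 1 else 0) else chi S x with hφ
      have hint : ∀ n, HasStepIntegral a b (φ n) (Cb + (1 * (sq n - p) + 0 * (q - sq n))) := by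
        intro n
        exact hSIgen (sq n) (hsqwin n) (fun x => if x < sq n then 1 else 0) 1 0
          (fun x hx => if_pos hx.2) (fun x hx => if_neg (not_lt.mpr hx.1.le))
      have happ : ApproxSeq a b φ (chi S) := by
        refine ⟨fun n => isStepOn_of_hasStepIntegral (hint n), ?_, ?_, ?_⟩
        · intro n x _
          show 0 ≤ (if p < x ∧ x < q then (if x < sq n then 1 else 0) else chi S x)
          by_cases h1 : p < x ∧ x < q
          · rw [if_pos h1]
            by_cases h2 : x < sq n
            · rw [if_pos h2]; exact zero_le_one
            · rw [if_neg h2]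
          · rw [if_neg h1]; exact chi_nonneg S x
        · intro n x _
          show (if p < x ∧ x < q then (if x < sq (n + 1) then 1 else 0) else chi S x)
            ≤ (if p < x ∧ x < q then (if x < sq n then 1 else 0) else chi S x)
          by_cases h1 : p < x ∧ x < q
          · rw [if_pos h1, if_pos h1]
            by_cases h2 : x < sq (n + 1)
            · rw [if_pos h2, if_pos (lt_of_lt_of_le h2 (hsqdec n))]
            · rw [if_neg h2]
              by_cases h3 : x < sq n
              · rw [if_pos h3]; exact zero_le_one
              · rw [if_neg h3]
          · rw [if_neg h1, if_neg h1]
        · apply nullSet_mono _ (nullSet_empty a b)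
          rintro x ⟨hxI, hxn⟩
          exfalso
          apply hxn
          by_cases h1 : p < x ∧ x < q
          · by_cases hxA : x ∈ A
            · have hchi : chi S x = 1 :=
                chi_of_mem ((hSwinA x ⟨h1.1, h1.2⟩ hxA).mpr hu)
              rw [hchi]
              refine seqConv_of_eventually ⟨0, fun n _ => ?_⟩
              show (if p < x ∧ x < q then (if x < sq n then 1 else 0) else chi S x) = 1
              rw [if_pos h1, if_pos (hcut x hxA _ (hsqB n))]
            · have hchi : chi S x = 0 :=
                chi_of_not_mem (fun hS => (hSwinB x ⟨h1.1, h1.2⟩ hxA).mp hS hu)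
              rw [hchi]
              obtain ⟨n0, hn0⟩ := hsqc x hxA
              refine seqConv_of_eventually ⟨n0, fun n hn => ?_⟩
              show (if p < x ∧ x < q then (if x < sq n then 1 else 0) else chi S x) = 0
              rw [if_pos h1, if_neg (not_lt.mpr ((antitone_of_succ hsqdec hn).trans hn0))]
          · refine seqConv_of_eventually ⟨0, fun n _ => ?_⟩
            show (if p < x ∧ x < q then (if x < sq n then 1 else 0) else chi S x) = chi S x
            rw [if_neg h1]
      have hconv := hJint.2 φ happ _ hint
      have hconv2 : SeqConv (fun n => sq n + (Cb - p)) J := by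
        refine seqConv_congr (fun n => ?_) hconv
        ring
      have hconv3 : SeqConv (fun n => (sq n + (Cb - p)) + (-(Cb - p))) (J + (-(Cb - p))) :=
        hconv2.add_const _
      have hconv4 : SeqConv sq (J + (-(Cb - p))) := by
        refine seqConv_congr (fun n => ?_) hconv3
        ring
      exact hnocut _ (isCutPoint_of_decr hcut hsqB hsqdec hsqc hconv4)
    · -- no upper ladder: `chi S` cannot even be measurable
      obtain ⟨ψ, hψstep, hψpos, hψdec, hψae⟩ := hJint.1
      set Z : Set F :=
        {x | x ∈ Set.Icc a b ∧ ¬ SeqConv (fun n => ψ n x) (chi S x)} with hZ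
      have hZnull : NullSet a b Z := hψae
      have hnotsub : ∀ γ δ : F, a < γ → γ < δ → δ < b → ∃ x, x ∈ Set.Ioo γ δ ∧ x ∉ Z := by
        intro γ δ h1 h2 h3
        by_contra hh
        push_neg at hh
        exact hB γ δ h1 h2 h3 (nullSet_mono hh hZnull)
      have hstrad : ∀ n, ∃ α β vv : F, α ∈ A ∧ β ∉ A ∧
          ∀ s ∈ Set.Ioo α β, ψ n s = vv := by
        intro n
        obtain ⟨kk, xx, hxx0, hxxk, hxxm, hxxc⟩ := hψstep n
        obtain ⟨i, hik, hiA, hiB⟩ := crossing xx kk (by rw [hxx0]; exact ha)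
          (by rw [hxxk]; exact hb)
        obtain ⟨vv, hvv⟩ := hxxc i hik
        exact ⟨xx i, xx (i + 1), vv, hiA, hiB, hvv⟩
      choose αf βf vf hαA hβB hvf using hstrad
      have hv1 : ∀ n, 1 ≤ vf n := by
        intro n
        set γ : F := max (αf n) p with hγ
        have hγA : γ ∈ A := by
          show max (αf n) p ∈ A
          rcases max_cases (αf n) p with ⟨he, _⟩ | ⟨he, _⟩ <;> rw [he]
          exacts [hαA n, hpA]
        obtain ⟨δ, hδA, hγδ⟩ := cut_no_max hcut hnocut hγA
        obtain ⟨x, hxIoo, hxZ⟩ := hnotsub γ δ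
          (lt_of_lt_of_le hap (le_max_right _ _)) hγδ (hcut δ hδA b hb)
        have hxA : x ∈ A := cut_mem_of_le hcut hδA hxIoo.2.le
        have hxW : x ∈ Set.Ioo p q :=
          ⟨lt_of_le_of_lt (le_max_right _ _) hxIoo.1, hcut x hxA q hqB⟩
        have hxIcc : x ∈ Set.Icc a b := hwinIcc hxW
        have hxconv : SeqConv (fun nn => ψ nn x) (chi S x) := by
          by_contra hc
          exact hxZ ⟨hxIcc, hc⟩
        have hchi : chi S x = 1 := chi_of_mem ((hSwinA x hxW hxA).mpr hu)
        rw [hchi] at hxconv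
        have hge := le_of_antitone_seqConv (fun kk => hψdec kk x hxIcc) hxconv n
        have heq : ψ n x = vf n := hvf n x
          ⟨lt_of_le_of_lt (le_max_left _ _) hxIoo.1, hcut x hxA _ (hβB n)⟩
        rw [heq] at hge
        exact hge
      have hnc : ¬ (∀ y, y ∉ A → ∃ n, min (βf n) q ≤ y) := by
        intro hc
        apply hlad
        refine ⟨fun n => min (βf n) q, fun n => ?_, hc⟩
        show min (βf n) q ∉ A
        rcases min_cases (βf n) q with ⟨he, _⟩ | ⟨he, _⟩ <;> rw [he]
        exacts [hβB n, hqB]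
      push_neg at hnc
      obtain ⟨y, hyB, hy⟩ := hnc
      have hyq : y < q := lt_of_lt_of_le (hy 0) (min_le_right _ _)
      have hyβ : ∀ n, y < βf n := fun n => lt_of_lt_of_le (hy n) (min_le_left _ _)
      obtain ⟨y2, hy2B, hy2y⟩ := cut_no_min hcut hnocut hyB
      obtain ⟨x, hxIoo, hxZ⟩ := hnotsub y2 y (hcut a ha y2 hy2B) hy2y (hyq.trans hqb)
      have hxB : x ∉ A := fun hxA => absurd (hcut x hxA y2 hy2B) (not_lt.mpr hxIoo.1.le)
      have hxW : x ∈ Set.Ioo p q := ⟨hcut p hpA x hxB, hxIoo.2.trans hyq⟩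
      have hxIcc : x ∈ Set.Icc a b := hwinIcc hxW
      have hxconv : SeqConv (fun nn => ψ nn x) (chi S x) := by
        by_contra hc
        exact hxZ ⟨hxIcc, hc⟩
      have hchi : chi S x = 0 := chi_of_not_mem (fun hS => (hSwinB x hxW hxB).mp hS hu)
      rw [hchi] at hxconv
      have heqv : ∀ nn, ψ nn x = vf nn :=
        fun nn => hvf nn x ⟨hcut _ (hαA nn) x hxB, hxIoo.2.trans (hyβ nn)⟩
      have hvconv : SeqConv vf 0 := seqConv_congr heqv hxconv
      obtain ⟨Nn, hNn⟩ := hvconv 1 one_pos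
      have h1 : vf Nn - 0 ∈ Set.Ioo (-1 : F) 1 := hNn Nn le_rfl
      rw [Set.mem_Ioo, sub_zero] at h1
      exact absurd (hv1 Nn) (not_le.mpr h1.2)
  · -- the union misses the window: constructive contradiction with the increasing ladder
    set wq : ℕ → F := fun n => max (w0 n) p2 with hwq
    have hwqA : ∀ n, wq n ∈ A := by
      intro n
      show max (w0 n) p2 ∈ A
      rcases max_cases (w0 n) p2 with ⟨he, _⟩ | ⟨he, _⟩ <;> rw [he]
      exacts [hw0A n, hp2A]
    have hwqm : ∀ n, wq n ≤ wq (n + 1) := fun n => max_le_max_right _ (hw0m n)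
    have hwqc : ∀ x ∈ A, ∃ n, x ≤ wq n := by
      intro x hx
      obtain ⟨n, hn⟩ := hw0c x hx
      exact ⟨n, hn.trans (le_max_left _ _)⟩
    have hwqwin : ∀ n, wq n ∈ Set.Ioo p q :=
      fun n => ⟨lt_of_lt_of_le hpp2 (le_max_right _ _), hcut _ (hwqA n) q hqB⟩
    set φ : ℕ → F → F :=
      fun n x => if p < x ∧ x < q then (if x ≤ wq n then 0 else 1) else chi S x with hφ
    have hint : ∀ n, HasStepIntegral a b (φ n) (Cb + (0 * (wq n - p) + 1 * (q - wq n))) := by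
      intro n
      exact hSIgen (wq n) (hwqwin n) (fun x => if x ≤ wq n then 0 else 1) 0 1
        (fun x hx => if_pos hx.2.le) (fun x hx => if_neg (not_le.mpr hx.1))
    have happ : ApproxSeq a b φ (chi S) := by
      refine ⟨fun n => isStepOn_of_hasStepIntegral (hint n), ?_, ?_, ?_⟩
      · intro n x _
        show 0 ≤ (if p < x ∧ x < q then (if x ≤ wq n then 0 else 1) else chi S x)
        by_cases h1 : p < x ∧ x < q
        · rw [if_pos h1]
          by_cases h2 : x ≤ wq n
          · rw [if_pos h2]
          · rw [if_neg h2]; exact zero_le_one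
        · rw [if_neg h1]; exact chi_nonneg S x
      · intro n x _
        show (if p < x ∧ x < q then (if x ≤ wq (n + 1) then 0 else 1) else chi S x)
          ≤ (if p < x ∧ x < q then (if x ≤ wq n then 0 else 1) else chi S x)
        by_cases h1 : p < x ∧ x < q
        · rw [if_pos h1, if_pos h1]
          by_cases h2 : x ≤ wq (n + 1)
          · rw [if_pos h2]
            by_cases h3 : x ≤ wq n
            · rw [if_pos h3]
            · rw [if_neg h3]; exact zero_le_one
          · rw [if_neg h2, if_neg (fun h3 => h2 (h3.trans (hwqm n)))]
        · rw [if_neg h1, if_neg h1]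
      · apply nullSet_mono _ (nullSet_empty a b)
        rintro x ⟨hxI, hxn⟩
        exfalso
        apply hxn
        by_cases h1 : p < x ∧ x < q
        · by_cases hxA : x ∈ A
          · have hchi : chi S x = 0 :=
              chi_of_not_mem (fun hS => hu ((hSwinA x ⟨h1.1, h1.2⟩ hxA).mp hS))
            rw [hchi]
            obtain ⟨n0, hn0⟩ := hwqc x hxA
            refine seqConv_of_eventually ⟨n0, fun n hn => ?_⟩
            show (if p < x ∧ x < q then (if x ≤ wq n then 0 else 1) else chi S x) = 0
            rw [if_pos h1, if_pos (hn0.trans (monotone_of_succ hwqm hn))]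
          · have hchi : chi S x = 1 :=
              chi_of_mem ((hSwinB x ⟨h1.1, h1.2⟩ hxA).mpr hu)
            rw [hchi]
            refine seqConv_of_eventually ⟨0, fun n _ => ?_⟩
            show (if p < x ∧ x < q then (if x ≤ wq n then 0 else 1) else chi S x) = 1
            rw [if_pos h1, if_neg (not_le.mpr (hcut _ (hwqA n) x hxA))]
        · refine seqConv_of_eventually ⟨0, fun n _ => ?_⟩
          show (if p < x ∧ x < q then (if x ≤ wq n then 0 else 1) else chi S x) = chi S x
          rw [if_neg h1]
    have hconv := hJint.2 φ happ _ hint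
    have hconv2 : SeqConv (fun n => (Cb + q) - wq n) J := by
      refine seqConv_congr (fun n => ?_) hconv
      ring
    have hconv3 : SeqConv (fun n => (Cb + q) - ((Cb + q) - wq n)) ((Cb + q) - J) :=
      hconv2.const_sub _
    have hconv4 : SeqConv wq ((Cb + q) - J) := by
      refine seqConv_congr (fun n => ?_) hconv3
      ring
    exact hnocut _ (isCutPoint_of_incr hcut hwqA hwqm hwqc hconv4)




end CaseB
section Main
variable {F : Type*} [Field F] [LinearOrder F] [IsStrictOrderedRing F]
open Set

lemma main_littlewood_aux (F : Type*) [Field F] [LinearOrder F] [IsStrictOrderedRing F]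
    (hCA : ¬ CutAxiom F) :
    ∃ a b : F, a ≤ b ∧ ∃ E ⊆ Set.Icc a b, MeasSet a b E ∧ ∃ ε : F, 0 < ε ∧
      ∀ (m : ℕ) (I : ℕ → Set F), (∀ i < m, IsInterval (I i) ∧ I i ⊆ Set.Icc a b) →
        ¬ ∃ J : F, HasLebIntegralNN a b
            (chi ((E \ ⋃ i < m, I i) ∪ ((⋃ i < m, I i) \ E))) J ∧ J < ε := by
  classical
  by_cases hNull : ∃ a b u v : F, a < u ∧ u < v ∧ v < b ∧ NullSet a b (Set.Ioo u v)
  · obtain ⟨a, b, u, v, hau, huv, hvb, hn⟩ := hNull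
    exact ⟨a, b, (hau.trans (huv.trans hvb)).le, caseA_main hau huv hvb hn⟩
  · push_neg at hNull
    by_cases hArch : ∀ x : F, ∃ n : ℕ, x < (n : F)
    · -- Archimedean case: use the gap coming from the failure of the Cut Axiom
      haveI hFA : Archimedean F := archimedean_iff_nat_lt.mpr hArch
      unfold CutAxiom at hCA
      push_neg at hCA
      obtain ⟨A, hAcut, hnocut⟩ := hCA
      obtain ⟨⟨a, ha⟩, hne, hcut⟩ := hAcut
      have hbex : ∃ b : F, b ∉ A := by
        by_contra hB
        push_neg at hB
        exact hne (Set.eq_univ_iff_forall.mpr hB)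
      obtain ⟨b, hb⟩ := hbex
      -- a rational ladder cofinal in A
      set t' : ℕ → F := fun n => if (((Denumerable.eqv ℚ).symm n : ℚ) : F) ∈ A
        then (((Denumerable.eqv ℚ).symm n : ℚ) : F) else a with ht'
      have ht'A : ∀ n, t' n ∈ A := by
        intro n
        show (if (((Denumerable.eqv ℚ).symm n : ℚ) : F) ∈ A
          then (((Denumerable.eqv ℚ).symm n : ℚ) : F) else a) ∈ A
        by_cases h : (((Denumerable.eqv ℚ).symm n : ℚ) : F) ∈ A
        · rw [if_pos h]; exact h
        · rw [if_neg h]; exact ha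
      have ht'c : ∀ x ∈ A, ∃ n, x ≤ t' n := by
        intro x hx
        obtain ⟨x', hx'A, hxx'⟩ := cut_no_max hcut hnocut hx
        obtain ⟨qq, hq1, hq2⟩ := exists_rat_btwn hxx'
        have hqA : ((qq : ℚ) : F) ∈ A := cut_mem_of_le hcut hx'A hq2.le
        refine ⟨(Denumerable.eqv ℚ) qq, ?_⟩
        show x ≤ (if (((Denumerable.eqv ℚ).symm ((Denumerable.eqv ℚ) qq) : ℚ) : F) ∈ A
          then (((Denumerable.eqv ℚ).symm ((Denumerable.eqv ℚ) qq) : ℚ) : F) else a)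
        rw [Equiv.symm_apply_apply] at *
        rw [if_pos hqA]
        exact hq1.le
      set tm : ℕ → F := fun n => Nat.rec (t' 0) (fun kk acc => max acc (t' (kk + 1))) n
        with htm
      have htmsucc : ∀ n, tm (n + 1) = max (tm n) (t' (n + 1)) := fun n => rfl
      have htmA : ∀ n, tm n ∈ A := by
        intro n
        induction n with
        | zero => exact ht'A 0
        | succ n ih =>
          rw [htmsucc]
          rcases max_cases (tm n) (t' (n + 1)) with ⟨he, _⟩ | ⟨he, _⟩ <;> rw [he]
          exacts [ih, ht'A (n + 1)]
      have htmm : ∀ n, tm n ≤ tm (n + 1) := fun n => by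
        rw [htmsucc]; exact le_max_left _ _
      have htmge : ∀ n, t' n ≤ tm n := by
        intro n
        cases n with
        | zero => exact le_rfl
        | succ n => rw [htmsucc]; exact le_max_right _ _
      have htmc : ∀ x ∈ A, ∃ n, x ≤ tm n := by
        intro x hx
        obtain ⟨n, hn⟩ := ht'c x hx
        exact ⟨n, hn.trans (htmge n)⟩
      refine ⟨a, b, (hcut a ha b hb).le, ?_⟩
      exact caseB_main ha hb hcut hnocut htmA htmm htmc
        (fun u v h1 h2 h3 => hNull a b u v h1 h2 h3)
    · -- non-Archimedean case: use the gap at the naturals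
      push_neg at hArch
      obtain ⟨b0, hb0⟩ := hArch
      set A : Set F := {x : F | ∃ n : ℕ, x < (n : F)} with hA
      have ha : (0 : F) ∈ A := ⟨1, by norm_num⟩
      have hb : b0 ∉ A := by
        rintro ⟨n, hn⟩
        exact absurd hn (not_lt.mpr (hb0 n))
      have hcut : ∀ x ∈ A, ∀ y ∉ A, x < y := by
        rintro x ⟨n, hn⟩ y hy
        have hny : (n : F) ≤ y := not_lt.mp (fun hc => hy ⟨n, hc⟩)
        exact lt_of_lt_of_le hn hny
      have hnocut : ∀ c : F, ¬ IsCutPoint A c := by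
        intro c hc
        by_cases hcA : c ∈ A
        · obtain ⟨n, hn⟩ := hcA
          have hc1A : c + 1 ∈ A := ⟨n + 1, by push_cast; linarith⟩
          have := (hc (c + 1) hc1A b0 hb).1
          linarith
        · have hc1B : c - 1 ∈ A := by
            by_contra hc1
            have := (hc 0 ha (c - 1) hc1).2
            linarith
          obtain ⟨n, hn⟩ := hc1B
          exact hcA ⟨n + 1, by push_cast; linarith⟩
      have htA : ∀ n : ℕ, ((n : F) : F) ∈ A := fun n => ⟨n + 1, by push_cast; linarith⟩
      have htm : ∀ n : ℕ, ((n : F)) ≤ ((n + 1 : ℕ) : F) := fun n => by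
        push_cast; linarith
      have htc : ∀ x ∈ A, ∃ n : ℕ, x ≤ ((n : ℕ) : F) := by
        rintro x ⟨n, hn⟩
        exact ⟨n, hn.le⟩
      refine ⟨0, b0, (hcut 0 ha b0 hb).le, ?_⟩
      exact caseB_main ha hb hcut hnocut htA htm htc
        (fun u v h1 h2 h3 => hNull 0 b0 u v h1 h2 h3)

end Main

theorem not_cutAxiom_implies_not_littlewoodFirst (F : Type*) [Field F] [LinearOrder F] [IsStrictOrderedRing F]
    (hCA : ¬ CutAxiom F) :
    ∃ a b : F, a ≤ b ∧ ∃ E ⊆ Set.Icc a b, MeasSet a b E ∧ ∃ ε : F, 0 < ε ∧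
      ∀ (m : ℕ) (I : ℕ → Set F), (∀ i < m, IsInterval (I i) ∧ I i ⊆ Set.Icc a b) →
        ¬ ∃ J : F, HasLebIntegralNN a b
            (chi ((E \ ⋃ i < m, I i) ∪ ((⋃ i < m, I i) \ E))) J ∧ J < ε := by
  exact main_littlewood_aux F hCA

end Littlewood
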